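/- arXiv:2506.19810 — 5 statements merged into one kernel-verified Lean document; each statement's English description precedes it below -/
import Mathlib

section
/- For any Y-lattice Λ (a family of subsets of a finite set Y containing Y and closed under pairwise intersections), the pivot dimension PD(Λ) is at most the VC dimension of Λ. Here PD(Λ) = max over A ∈ Λ of the minimal cardinality of a subset B ⊆ A such that A is contained in the Λ-hull of B, where the Λ-hull of B is the intersection of all elements of Λ containing B. -/
/-- A `Y`-lattice: a family of subsets of `Y` containing `Y` itself and closed
under binary intersections. -/
def IsYLattice {Y : Type} (L : Set (Set Y)) : Prop :=
  Set.univ ∈ L ∧ ∀ A ∈ L, ∀ B ∈ L, A ∩ B ∈ L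

/-- The `Λ`-hull of `A`: the intersection of all members of `Λ` containing `A`. -/
def latHull {Y : Type} (L : Set (Set Y)) (A : Set Y) : Set Y :=
  ⋂₀ {B | B ∈ L ∧ A ⊆ B}

/-- The `Λ`-complexity of `A`: minimal cardinality of `B ⊆ A` with `A ⊆ hull(B)`. -/
noncomputable def latComplexity {Y : Type} (L : Set (Set Y)) (A : Set Y) : ℕ :=
  sInf {n : ℕ | ∃ B : Set Y, B ⊆ A ∧ B.ncard = n ∧ A ⊆ latHull L B}

/-- The pivot dimension of `Λ`: maximal `Λ`-complexity of an element of `Λ`. -/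
noncomputable def PDim {Y : Type} (L : Set (Set Y)) : ℕ :=
  sSup {n : ℕ | ∃ A ∈ L, n = latComplexity L A}

/-- `Λ` shatters `S` if every subset of `S` is a trace `S ∩ C` for some `C ∈ Λ`. -/
def Shatters {Y : Type} (L : Set (Set Y)) (S : Set Y) : Prop :=
  ∀ B ⊆ S, ∃ C ∈ L, S ∩ C = B

/-- VC dimension of the family `Λ`. -/
noncomputable def VCdim {Y : Type} (L : Set (Set Y)) : ℕ :=
  sSup {n : ℕ | ∃ S : Set Y, Shatters L S ∧ S.ncard = n}

/-- `Λ(H)`: the minimal `Y`-lattice containing every value `h x` for `h ∈ H`. -/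
def LamH {X Y : Type} (H : Set (X → Set Y)) : Set (Set Y) :=
  {A | ∀ L : Set (Set Y), IsYLattice L → (∀ h ∈ H, ∀ x : X, h x ∈ L) → A ∈ L}

lemma subset_latHull {Y : Type} (L : Set (Set Y)) (A : Set Y) : A ⊆ latHull L A := by
  intro x hx C hC
  exact hC.2 hx

lemma latHull_mono {Y : Type} (L : Set (Set Y)) {A B : Set Y} (h : A ⊆ B) :
    latHull L A ⊆ latHull L B := by
  intro x hx C hC
  exact hx C ⟨hC.1, h.trans hC.2⟩

lemma latHull_subset {Y : Type} {L : Set (Set Y)} {A C : Set Y} (hC : C ∈ L) (h : A ⊆ C) :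
    latHull L A ⊆ C :=
  Set.sInter_subset_of_mem ⟨hC, h⟩

lemma sInter_mem_of_finite {Y : Type} {L : Set (Set Y)} (hL : IsYLattice L)
    {F : Set (Set Y)} (hF : F.Finite) (hFL : F ⊆ L) : ⋂₀ F ∈ L := by
  refine Set.Finite.induction_on (motive := fun F _ => F ⊆ L → ⋂₀ F ∈ L) F hF ?_ ?_ hFL
  · intro _; simpa using hL.1
  · intro C F _ _ ih h
    rw [Set.sInter_insert]
    exact hL.2 _ (h (Set.mem_insert _ _)) _ (ih fun D hD => h (Set.mem_insert_of_mem _ hD))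

lemma latHull_mem {Y : Type} [Fintype Y] {L : Set (Set Y)} (hL : IsYLattice L)
    (B : Set Y) : latHull L B ∈ L := by
  exact sInter_mem_of_finite hL (Set.toFinite _) (fun D hD => hD.1)

/-- For any `Y`-lattice `Λ` on a finite set `Y`, the pivot dimension
of `Λ` is at most its VC dimension. -/
theorem pivotDim_le_vcDim {Y : Type} [Fintype Y] (L : Set (Set Y))
    (hL : IsYLattice L) : PDim L ≤ VCdim L := by
  unfold PDim VCdim
  apply csSup_le'
  rintro n ⟨A, hA, rfl⟩
  -- the witness set for latComplexity
  set S : Set ℕ := {n : ℕ | ∃ B : Set Y, B ⊆ A ∧ B.ncard = n ∧ A ⊆ latHull L B} with hS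
  have hSne : S.Nonempty := ⟨A.ncard, A, subset_rfl, rfl, subset_latHull L A⟩
  have hmem := Nat.sInf_mem hSne
  obtain ⟨B, hBA, hBcard, hAhull⟩ := hmem
  -- minimality: removing a point of B breaks the hull condition
  have hmin : ∀ b ∈ B, ¬ A ⊆ latHull L (B \ {b}) := by
    intro b hb hcon
    have h1 : (B \ {b}).ncard ∈ S := ⟨B \ {b}, (Set.diff_subset).trans hBA, rfl, hcon⟩
    have h2 : (B \ {b}).ncard < B.ncard :=
      Set.ncard_diff_singleton_lt_of_mem hb (Set.toFinite B)
    have := Nat.sInf_le h1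
    omega
  -- B is shattered
  have hshat : Shatters L B := by
    intro B' hB'
    refine ⟨latHull L B', latHull_mem hL B', ?_⟩
    apply Set.Subset.antisymm
    · rintro x ⟨hxB, hxH⟩
      by_contra hx
      have hsub : B' ⊆ B \ {x} := fun y hy =>
        ⟨hB' hy, fun h => hx (h ▸ hy)⟩
      have hxh : x ∈ latHull L (B \ {x}) := latHull_mono L hsub hxH
      -- then hull (B \ {x}) contains B, hence contains hull B ⊇ A
      have hBsub : B ⊆ latHull L (B \ {x}) := by
        intro y hy
        by_cases hyx : y = x
        · exact hyx ▸ hxh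
        · exact subset_latHull L (B \ {x}) ⟨hy, hyx⟩
      have : latHull L B ⊆ latHull L (B \ {x}) :=
        latHull_subset (latHull_mem hL _) hBsub
      exact hmin x hxB (hAhull.trans this)
    · intro x hx
      exact ⟨hB' hx, subset_latHull L B' hx⟩
  -- conclude
  have hbdd : BddAbove {n : ℕ | ∃ S : Set Y, Shatters L S ∧ S.ncard = n} := by
    refine ⟨(Set.univ : Set Y).ncard, ?_⟩
    rintro m ⟨T, _, rfl⟩
    exact Set.ncard_le_ncard (Set.subset_univ T) Set.finite_univ
  calc latComplexity L A = B.ncard := hBcard.symm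
    _ ≤ sSup {n : ℕ | ∃ S : Set Y, Shatters L S ∧ S.ncard = n} := le_csSup hbdd ⟨B, hshat, rfl⟩
end

section
/- Let Y = [n]^d with n ≥ 3, d ≥ 1, and let Λ be the family of all axis-aligned boxes {y ∈ Y : ∀ i < d, a_i ≤ y_i ≤ b_i} for a, b ∈ Y. Then the pivot dimension of Λ equals 2. -/
/-- The family of axis-aligned boxes in `[n]^d` (including the empty box). -/
def boxFam (d n : ℕ) : Set (Set (Fin d → Fin n)) :=
  {S | ∃ a b : Fin d → Fin n, S = {y : Fin d → Fin n | ∀ i : Fin d, a i ≤ y i ∧ y i ≤ b i}}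

/-- for `Y = [n]^d` with `n ≥ 3`, `d ≥ 1`, the pivot dimension of the
family of axis-aligned boxes equals 2. -/
theorem pivotDim_boxFam (d n : ℕ) (hd : 1 ≤ d) (hn : 3 ≤ n) :
    PDim (boxFam d n) = 2 := by
  classical
  set L := boxFam d n with hL
  let i0 : Fin d := ⟨0, hd⟩
  let bot : Fin d → Fin n := fun _ => ⟨0, by omega⟩
  let top : Fin d → Fin n := fun _ => ⟨n - 1, by omega⟩
  let one : Fin d → Fin n := fun _ => ⟨1, by omega⟩
  have hullMem : ∀ (B : Set (Fin d → Fin n)) (y : Fin d → Fin n),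
      y ∈ latHull L B ↔ ∀ C, C ∈ L → B ⊆ C → y ∈ C := by
    intro B y
    constructor
    · intro h C hC hBC; exact h C ⟨hC, hBC⟩
    · intro h C hC; exact h C hC.1 hC.2
  -- univ is a box
  have hunivL : (Set.univ : Set (Fin d → Fin n)) ∈ L := by
    refine ⟨bot, top, ?_⟩
    ext y
    simp only [Set.mem_univ, Set.mem_setOf_eq, true_iff]
    intro i
    constructor
    · show (0 : ℕ) ≤ (y i).val; omega
    · show (y i).val ≤ n - 1; have := (y i).2; omega
  -- the empty set is a box
  have hemptyL : (∅ : Set (Fin d → Fin n)) ∈ L := by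
    refine ⟨one, bot, ?_⟩
    ext y
    simp only [Set.mem_empty_iff_false, Set.mem_setOf_eq, false_iff]
    intro h
    have h1 : (1 : ℕ) ≤ (y i0).val := (h i0).1
    have h2 : (y i0).val ≤ 0 := (h i0).2
    omega
  -- complexity of univ is 2
  have h2mem : (2 : ℕ) ∈ {m : ℕ | ∃ B : Set (Fin d → Fin n), B ⊆ Set.univ ∧
      B.ncard = m ∧ Set.univ ⊆ latHull L B} := by
    refine ⟨{bot, top}, Set.subset_univ _, ?_, ?_⟩
    · rw [Set.ncard_pair]
      intro h
      have : (bot i0).val = (top i0).val := congrArg Fin.val (congrFun h i0)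
      simp only [bot, top] at this
      omega
    · intro y _
      rw [hullMem]
      rintro C ⟨a, b, rfl⟩ hBC
      have hbotC : ∀ i, a i ≤ bot i ∧ bot i ≤ b i := hBC (Set.mem_insert _ _)
      have htopC : ∀ i, a i ≤ top i ∧ top i ≤ b i := hBC (Set.mem_insert_of_mem _ rfl)
      intro i
      constructor
      · have h1 : (a i).val ≤ 0 := (hbotC i).1
        show (a i).val ≤ (y i).val; omega
      · have h1 : (n - 1 : ℕ) ≤ (b i).val := (htopC i).2
        have := (y i).2
        show (y i).val ≤ (b i).val; omega
  have hlb : ∀ m ∈ {m : ℕ | ∃ B : Set (Fin d → Fin n), B ⊆ Set.univ ∧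
      B.ncard = m ∧ Set.univ ⊆ latHull L B}, 2 ≤ m := by
    rintro m ⟨B, -, rfl, hsub⟩
    by_contra hlt
    push_neg at hlt
    interval_cases h : B.ncard
    · have hBe : B = ∅ := (Set.ncard_eq_zero (Set.toFinite B)).mp h
      subst hBe
      have : bot ∈ latHull L (∅ : Set (Fin d → Fin n)) := hsub (Set.mem_univ _)
      rw [hullMem] at this
      exact this ∅ hemptyL (by simp)
    · obtain ⟨x, hx⟩ := Set.ncard_eq_one.mp h
      subst hx
      have hxbox : {y : Fin d → Fin n | ∀ i, x i ≤ y i ∧ y i ≤ x i} ∈ L := ⟨x, x, rfl⟩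
      have key : ∀ z : Fin d → Fin n, z = x := by
        intro z
        have : z ∈ latHull L {x} := hsub (Set.mem_univ _)
        rw [hullMem] at this
        have hz := this _ hxbox (by
          intro w hw
          rw [Set.mem_singleton_iff] at hw
          subst hw
          exact fun i => ⟨le_refl _, le_refl _⟩)
        funext i
        exact le_antisymm (hz i).2 (hz i).1
      have h1 := congrArg Fin.val (congrFun ((key bot).trans (key one).symm) i0)
      simp only [bot, one] at h1
      omega
  have hcompuniv : latComplexity L (Set.univ : Set (Fin d → Fin n)) = 2 := by
    refine le_antisymm (Nat.sInf_le h2mem) (le_csInf ⟨2, h2mem⟩ hlb)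
  -- upper bound on complexity of any box
  have hub : ∀ m ∈ {m : ℕ | ∃ A ∈ L, m = latComplexity L A}, m ≤ 2 := by
    rintro m ⟨A, hA, rfl⟩
    obtain ⟨a, b, rfl⟩ := hA
    set A := {y : Fin d → Fin n | ∀ i, a i ≤ y i ∧ y i ≤ b i} with hAdef
    by_cases hne : A.Nonempty
    · obtain ⟨y0, hy0⟩ := hne
      have haA : a ∈ A := fun i => ⟨le_refl _, le_trans (hy0 i).1 (hy0 i).2⟩
      have hbA : b ∈ A := fun i => ⟨le_trans (hy0 i).1 (hy0 i).2, le_refl _⟩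
      have hmem : ({a, b} : Set (Fin d → Fin n)).ncard ∈
          {m : ℕ | ∃ B : Set (Fin d → Fin n), B ⊆ A ∧ B.ncard = m ∧ A ⊆ latHull L B} := by
        refine ⟨{a, b}, ?_, rfl, ?_⟩
        · intro w hw
          rcases hw with hw | hw
          · subst hw; exact haA
          · rw [Set.mem_singleton_iff] at hw; subst hw; exact hbA
        · intro y hy
          rw [hullMem]
          rintro C ⟨c, e, rfl⟩ hBC
          have haC := hBC (Set.mem_insert _ _)
          have hbC := hBC (Set.mem_insert_of_mem _ rfl)
          intro i
          exact ⟨le_trans (haC i).1 (hy i).1, le_trans (hy i).2 (hbC i).2⟩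
      calc latComplexity L A ≤ ({a, b} : Set (Fin d → Fin n)).ncard := Nat.sInf_le hmem
        _ ≤ ({b} : Set (Fin d → Fin n)).ncard + 1 := Set.ncard_insert_le _ _
        _ ≤ 2 := by rw [Set.ncard_singleton]
    · rw [Set.not_nonempty_iff_eq_empty] at hne
      have h0 : (0 : ℕ) ∈
          {m : ℕ | ∃ B : Set (Fin d → Fin n), B ⊆ A ∧ B.ncard = m ∧ A ⊆ latHull L B} := by
        exact ⟨∅, Set.empty_subset _, Set.ncard_empty _, by rw [hne]; exact Set.empty_subset _⟩
      calc latComplexity L A ≤ 0 := Nat.sInf_le h0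
        _ ≤ 2 := by omega
  have h2S : (2 : ℕ) ∈ {m : ℕ | ∃ A ∈ L, m = latComplexity L A} :=
    ⟨Set.univ, hunivL, hcompuniv.symm⟩
  exact le_antisymm (csSup_le ⟨2, h2S⟩ hub) (le_csSup ⟨2, hub⟩ h2S)
end

section
/- For any nonempty finite hypothesis class H of functions from a domain X to subsets of a finite label set Y (with each hypothesis nonempty somewhere), the ambiguous Littlestone dimension of H is at most |H| − 1. That is, every ambiguous shattered H-tree has rank at most |H| − 1. -/
/-- A finite rooted tree: vertices, a root, and a parent map under which every
vertex reaches the root. -/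
structure RTree where
  V : Type
  [fin : Fintype V]
  root : V
  parent : V → V
  parent_root : parent root = root
  reaches : ∀ v : V, ∃ k : ℕ, parent^[k] v = root

namespace RTree

/-- Children of a vertex (the root is not a child of anything). -/
def children (t : RTree) (v : t.V) : Set t.V := {w | t.parent w = v ∧ w ≠ t.root}

def IsLeaf (t : RTree) (v : t.V) : Prop := t.children v = ∅

/-- `a` is an ancestor (or equal to) `u`. -/
def Anc (t : RTree) (a u : t.V) : Prop := ∃ k : ℕ, t.parent^[k] u = a

noncomputable def depthOf (t : RTree) (v : t.V) : ℕ := sInf {k : ℕ | t.parent^[k] v = t.root}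

noncomputable def depth (t : RTree) : ℕ := sSup {n : ℕ | ∃ v : t.V, n = t.depthOf v}

end RTree

/-- An ambiguous shattered `H`-tree: internal vertices carry instances, non-root
vertices (identified with the edges to their parents) carry labels, distinct among
siblings, leaves carry hypotheses from `H` compatible with all edge labels above
them, and `E0` selects exactly one child edge of each internal vertex. -/
structure AmbTree (X Y : Type) (H : Set (X → Set Y)) where
  t : RTree
  xlab : t.V → X
  ylab : t.V → Y
  hlab : t.V → (X → Set Y)
  E0 : Set t.V
  e0_ne_root : ∀ a ∈ E0, a ≠ t.root
  e0_unique : ∀ v : t.V, (t.children v).Nonempty → ∃! a : t.V, a ∈ t.children v ∩ E0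
  sib_distinct : ∀ a b : t.V, a ≠ t.root → b ≠ t.root →
    t.parent a = t.parent b → a ≠ b → ylab a ≠ ylab b
  hlab_mem : ∀ u : t.V, t.IsLeaf u → hlab u ∈ H
  path_mem : ∀ u a : t.V, t.IsLeaf u → t.Anc a u → a ≠ t.root →
    ylab a ∈ hlab u (xlab (t.parent a))

namespace AmbTree

variable {X Y : Type} {H : Set (X → Set Y)}

/-- Edge `a` (on the root-to-`u` path) is relevant to leaf `u`. -/
def Relevant (T : AmbTree X Y H) (a u : T.t.V) : Prop :=
  a ≠ T.t.root ∧ T.t.Anc a u ∧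
    (a ∉ T.E0 ∨ ∃ b : T.t.V, T.t.parent b = T.t.parent a ∧ b ≠ T.t.root ∧
      T.ylab b ∉ T.hlab u (T.xlab (T.t.parent a)))

noncomputable def relCount (T : AmbTree X Y H) (u : T.t.V) : ℕ :=
  {a : T.t.V | T.Relevant a u}.ncard

/-- Rank: the minimum over leaves of the number of relevant edges. -/
noncomputable def rank (T : AmbTree X Y H) : ℕ :=
  sInf {n : ℕ | ∃ u : T.t.V, T.t.IsLeaf u ∧ n = T.relCount u}

noncomputable def depth (T : AmbTree X Y H) : ℕ := T.t.depth

end AmbTree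

section Aux

namespace RTree

lemma iterate_root' (t : RTree) (k : ℕ) : t.parent^[k] t.root = t.root := by
  induction k with
  | zero => rfl
  | succ n ih => rw [Function.iterate_succ_apply, t.parent_root, ih]

lemma anc_refl' (t : RTree) (a : t.V) : t.Anc a a := ⟨0, rfl⟩

lemma anc_trans' {t : RTree} {a b c : t.V} (h1 : t.Anc a b) (h2 : t.Anc b c) : t.Anc a c := by
  obtain ⟨k, hk⟩ := h1; obtain ⟨l, hl⟩ := h2
  exact ⟨k + l, by rw [Function.iterate_add_apply, hl, hk]⟩

lemma anc_root_eq' {t : RTree} {a : t.V} (h : t.Anc a t.root) : a = t.root := by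
  obtain ⟨k, hk⟩ := h; rw [t.iterate_root'] at hk; exact hk.symm

lemma anc_parent_of_ne' {t : RTree} {a b : t.V} (h : t.Anc a b) (hne : a ≠ b) :
    t.Anc a (t.parent b) := by
  obtain ⟨k, hk⟩ := h
  cases k with
  | zero => exact absurd hk.symm hne
  | succ n => exact ⟨n, by rw [← Function.iterate_succ_apply]; exact hk⟩

lemma anc_total' {t : RTree} {a b u : t.V} (ha : t.Anc a u) (hb : t.Anc b u) :
    t.Anc a b ∨ t.Anc b a := by
  obtain ⟨k, hk⟩ := ha; obtain ⟨l, hl⟩ := hb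
  rcases le_total k l with h | h
  · right
    refine ⟨l - k, ?_⟩
    rw [← hk, ← Function.iterate_add_apply, Nat.sub_add_cancel h, hl]
  · left
    refine ⟨k - l, ?_⟩
    rw [← hl, ← Function.iterate_add_apply, Nat.sub_add_cancel h, hk]

lemma depthOf_spec' (t : RTree) (v : t.V) : t.parent^[t.depthOf v] v = t.root :=
  Nat.sInf_mem (t.reaches v)

lemma depthOf_le' (t : RTree) {v : t.V} {k : ℕ} (h : t.parent^[k] v = t.root) :
    t.depthOf v ≤ k := Nat.sInf_le h

lemma depthOf_lt_card' (t : RTree) (v : t.V) :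
    t.depthOf v < @Fintype.card t.V t.fin := by
  set d := t.depthOf v with hd
  have hinj : Function.Injective (fun i : Fin (d + 1) => t.parent^[(i : ℕ)] v) := by
    have hne : ∀ i j : ℕ, i < j → j ≤ d → t.parent^[i] v ≠ t.parent^[j] v := by
      intro i j hij hjd heq
      have hroot : t.parent^[(d - j) + i] v = t.root := by
        rw [Function.iterate_add_apply, heq, ← Function.iterate_add_apply,
          Nat.sub_add_cancel hjd]
        exact t.depthOf_spec' v
      have := t.depthOf_le' hroot
      omega
    intro i j heq
    rcases lt_trichotomy (i : ℕ) (j : ℕ) with h | h | h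
    · exact absurd heq (hne _ _ h (Nat.lt_succ_iff.mp j.isLt))
    · exact Fin.ext h
    · exact absurd heq.symm (hne _ _ h (Nat.lt_succ_iff.mp i.isLt))
  have h2 := @Fintype.card_le_of_injective (Fin (d + 1)) t.V _ t.fin _ hinj
  simp only [Fintype.card_fin] at h2
  omega

lemma depthOf_parent_succ_le' {t : RTree} {w : t.V} (hw : w ≠ t.root) :
    t.depthOf (t.parent w) + 1 ≤ t.depthOf w := by
  set d := t.depthOf w with hd
  have hdpos : d ≠ 0 := by
    intro h0
    have := t.depthOf_spec' w
    rw [← hd, h0] at this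
    exact hw this
  have hroot : t.parent^[d - 1] (t.parent w) = t.root := by
    rw [← Function.iterate_succ_apply, Nat.succ_eq_add_one, Nat.sub_add_cancel
      (Nat.one_le_iff_ne_zero.mpr hdpos)]
    exact t.depthOf_spec' w
  have := t.depthOf_le' hroot
  omega

end RTree

namespace AmbTree

variable {X Y : Type} {H : Set (X → Set Y)}

/-- The version space at a vertex: hypotheses consistent with all edges above. -/
def VS (T : AmbTree X Y H) (v : T.t.V) : Set (X → Set Y) :=
  {g | g ∈ H ∧ ∀ a : T.t.V, T.t.Anc a v → a ≠ T.t.root →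
    T.ylab a ∈ g (T.xlab (T.t.parent a))}

lemma VS_mono (T : AmbTree X Y H) {a b : T.t.V} (h : T.t.Anc a b) :
    T.VS b ⊆ T.VS a :=
  fun g hg => ⟨hg.1, fun c hc hcr => hg.2 c (RTree.anc_trans' hc h) hcr⟩

lemma hlab_mem_VS (T : AmbTree X Y H) {u : T.t.V} (hu : T.t.IsLeaf u) :
    T.hlab u ∈ T.VS u :=
  ⟨T.hlab_mem u hu, fun a ha har => T.path_mem u a hu ha har⟩

open scoped Classical in
/-- One greedy step down the tree. -/
noncomputable def stepV (T : AmbTree X Y H) (v : T.t.V) : T.t.V :=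
  if h : (T.t.children v).Nonempty then
    if hs : ∃ a ∈ T.t.children v, ∃ g ∈ T.VS v, T.ylab a ∉ g (T.xlab v) then hs.choose
    else (T.e0_unique v h).exists.choose
  else v

lemma stepV_spec (T : AmbTree X Y H) {v : T.t.V} (h : (T.t.children v).Nonempty) :
    T.stepV v ∈ T.t.children v ∧
      ((∃ g ∈ T.VS v, T.ylab (T.stepV v) ∉ g (T.xlab v)) ∨
       (T.stepV v ∈ T.E0 ∧ ∀ b ∈ T.t.children v, ∀ g ∈ T.VS v,
          T.ylab b ∈ g (T.xlab v))) := by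
  classical
  unfold stepV
  rw [dif_pos h]
  split_ifs with hs
  · obtain ⟨hmem, hg⟩ := hs.choose_spec
    exact ⟨hmem, Or.inl hg⟩
  · have hspec := (T.e0_unique v h).exists.choose_spec
    push_neg at hs
    exact ⟨hspec.1, Or.inr ⟨hspec.2, hs⟩⟩

lemma stepV_leaf (T : AmbTree X Y H) {v : T.t.V} (h : T.t.IsLeaf v) :
    T.stepV v = v := by
  classical
  unfold stepV
  rw [dif_neg]
  rw [RTree.IsLeaf] at h
  simp [h]

/-- The greedy path from the root. -/
noncomputable def pathF (T : AmbTree X Y H) (k : ℕ) : T.t.V :=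
  (T.stepV)^[k] T.t.root

lemma pathF_succ (T : AmbTree X Y H) (k : ℕ) :
    T.pathF (k + 1) = T.stepV (T.pathF k) := Function.iterate_succ_apply' _ _ _

lemma anc_stepV (T : AmbTree X Y H) (v : T.t.V) : T.t.Anc v (T.stepV v) := by
  by_cases h : (T.t.children v).Nonempty
  · exact ⟨1, (T.stepV_spec h).1.1⟩
  · have : T.stepV v = v := by
      classical
      unfold stepV; rw [dif_neg h]
    rw [this]; exact RTree.anc_refl' _ _
lemma anc_pathF (T : AmbTree X Y H) {j k : ℕ} (h : j ≤ k) :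
    T.t.Anc (T.pathF j) (T.pathF k) := by
  induction k with
  | zero =>
    have hj : j = 0 := Nat.le_zero.mp h
    subst hj; exact RTree.anc_refl' _ _
  | succ n ih =>
    rcases Nat.lt_or_ge j (n + 1) with h' | h'
    · have := ih (Nat.lt_succ_iff.mp h')
      refine RTree.anc_trans' this ?_
      rw [pathF_succ]
      exact T.anc_stepV _
    · have hj : j = n + 1 := le_antisymm h h'
      subst hj; exact RTree.anc_refl' _ _

lemma exists_leaf_pathF (T : AmbTree X Y H) : ∃ k : ℕ, T.t.IsLeaf (T.pathF k) := by
  haveI := T.t.fin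
  have main : ∀ k : ℕ, T.t.IsLeaf (T.pathF k) ∨ k ≤ T.t.depthOf (T.pathF k) := by
    intro k
    induction k with
    | zero => exact Or.inr (Nat.zero_le _)
    | succ n ih =>
      by_cases hl : T.t.IsLeaf (T.pathF n)
      · left
        rw [pathF_succ, T.stepV_leaf hl]
        exact hl
      · have hd : n ≤ T.t.depthOf (T.pathF n) := ih.resolve_left hl
        have hcn : (T.t.children (T.pathF n)).Nonempty :=
          Set.nonempty_iff_ne_empty.mpr hl
        have hchild := (T.stepV_spec hcn).1
        right
        rw [pathF_succ]
        have h1 := RTree.depthOf_parent_succ_le' (t := T.t) (w := T.stepV (T.pathF n)) hchild.2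
        rw [hchild.1] at h1
        omega
  rcases main (@Fintype.card T.t.V T.t.fin) with h | h
  · exact ⟨_, h⟩
  · have h2 := T.t.depthOf_lt_card' (T.pathF (@Fintype.card T.t.V T.t.fin))
    omega

lemma anc_pathF_char (T : AmbTree X Y H) :
    ∀ k : ℕ, ∀ a : T.t.V, T.t.Anc a (T.pathF k) →
      a = T.t.root ∨ ∃ j : ℕ, j < k ∧ ¬T.t.IsLeaf (T.pathF j) ∧
        a = T.pathF (j + 1) ∧ T.t.parent a = T.pathF j := by
  intro k
  induction k with
  | zero => exact fun a ha => Or.inl (RTree.anc_root_eq' ha)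
  | succ n ih =>
    intro a ha
    by_cases hl : T.t.IsLeaf (T.pathF n)
    · rw [pathF_succ, T.stepV_leaf hl] at ha
      rcases ih a ha with h0 | ⟨j, hj, hrest⟩
      · exact Or.inl h0
      · exact Or.inr ⟨j, Nat.lt_succ_of_lt hj, hrest⟩
    · have hcn : (T.t.children (T.pathF n)).Nonempty :=
        Set.nonempty_iff_ne_empty.mpr hl
      by_cases hae : a = T.pathF (n + 1)
      · refine Or.inr ⟨n, Nat.lt_succ_self n, hl, hae, ?_⟩
        rw [hae, pathF_succ]
        exact (T.stepV_spec hcn).1.1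
      · have ha' : T.t.Anc a (T.pathF n) := by
          have := RTree.anc_parent_of_ne' ha hae
          rw [pathF_succ] at this
          rwa [(T.stepV_spec hcn).1.1] at this
        rcases ih a ha' with h0 | ⟨j, hj, hrest⟩
        · exact Or.inl h0
        · exact Or.inr ⟨j, Nat.lt_succ_of_lt hj, hrest⟩

end AmbTree

end Aux

/-- for a nonempty finite hypothesis class `H` (each hypothesis
nonempty somewhere), every ambiguous shattered `H`-tree has rank at most `|H| - 1`;
hence the ambiguous Littlestone dimension of `H` is at most `|H| - 1`. -/
theorem rank_le_card_sub_one {X Y : Type} [Fintype Y] (H : Set (X → Set Y))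
    (hfin : H.Finite) (hne : H.Nonempty)
    (hval : ∀ h ∈ H, ∃ x : X, (h x).Nonempty)
    (T : AmbTree X Y H) : T.rank ≤ H.ncard - 1 := by
  classical
  haveI := T.t.fin
  obtain ⟨K, hK⟩ := T.exists_leaf_pathF
  set u := T.pathF K with hu
  have hhu : T.hlab u ∈ T.VS u := T.hlab_mem_VS hK
  -- each relevant edge admits an eliminated hypothesis
  have key : ∀ a : T.t.V, T.Relevant a u →
      ∃ g ∈ T.VS (T.t.parent a), T.ylab a ∉ g (T.xlab (T.t.parent a)) := by
    rintro a ⟨har, hanc, hrel⟩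
    rcases T.anc_pathF_char K a hanc with h0 | ⟨j, hjk, hnl, hae, hpa⟩
    · exact absurd h0 har
    · have hcn : (T.t.children (T.pathF j)).Nonempty :=
        Set.nonempty_iff_ne_empty.mpr hnl
      have hspec := T.stepV_spec hcn
      have hastep : a = T.stepV (T.pathF j) := by rw [hae, AmbTree.pathF_succ]
      rcases hspec.2 with ⟨g, hg, hgy⟩ | ⟨hE0, hall⟩
      · rw [hpa]
        exact ⟨g, hg, by rw [← hastep] at hgy; exact hgy⟩
      · exfalso
        have huj : T.hlab u ∈ T.VS (T.pathF j) :=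
          T.VS_mono (T.anc_pathF (le_of_lt hjk)) hhu
        rcases hrel with hne0 | ⟨b, hbp, hbr, hby⟩
        · exact hne0 (hastep ▸ hE0)
        · have hbchild : b ∈ T.t.children (T.pathF j) := ⟨by rw [hbp, hpa], hbr⟩
          have := hall b hbchild _ huj
          rw [hpa] at hby
          exact hby this
  -- choose witnesses
  have key2 : ∀ a : T.t.V, ∃ g : X → Set Y, T.Relevant a u →
      g ∈ T.VS (T.t.parent a) ∧ g ∉ T.VS a := by
    intro a
    by_cases hr : T.Relevant a u
    · obtain ⟨g, hg, hgy⟩ := key a hr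
      refine ⟨g, fun _ => ⟨hg, fun hgA => hgy ?_⟩⟩
      exact hgA.2 a (RTree.anc_refl' _ _) hr.1
    · exact ⟨fun _ => ∅, fun h => absurd h hr⟩
  choose w hw using key2
  set R : Set T.t.V := {a : T.t.V | T.Relevant a u} with hR
  have hmaps : ∀ a ∈ R, w a ∈ H \ {T.hlab u} := by
    intro a ha
    refine ⟨((hw a ha).1).1, ?_⟩
    simp only [Set.mem_singleton_iff]
    intro heq
    have : T.hlab u ∈ T.VS a := T.VS_mono ha.2.1 hhu
    rw [← heq] at this
    exact (hw a ha).2 this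
  have hlt : ∀ a b : T.t.V, a ∈ R → b ∈ R → T.t.Anc a b → a ≠ b → w a ≠ w b := by
    intro a b ha hb hab hne heq
    have h1 : w b ∈ T.VS a :=
      T.VS_mono (RTree.anc_parent_of_ne' hab hne) (hw b hb).1
    rw [← heq] at h1
    exact (hw a ha).2 h1
  have hinj : Set.InjOn w R := by
    intro a ha b hb heq
    by_contra hne
    rcases RTree.anc_total' ha.2.1 hb.2.1 with h | h
    · exact hlt a b ha hb h hne heq
    · exact hlt b a hb ha h (Ne.symm hne) heq.symm
  have hcard : R.ncard ≤ (H \ {T.hlab u}).ncard :=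
    Set.ncard_le_ncard_of_injOn w hmaps hinj (hfin.subset Set.diff_subset)
  have hdiff : (H \ {T.hlab u}).ncard = H.ncard - 1 :=
    Set.ncard_diff_singleton_of_mem (T.hlab_mem u hK)
  have hrank : T.rank ≤ T.relCount u := Nat.sInf_le ⟨u, hK, rfl⟩
  have : T.relCount u = R.ncard := rfl
  omega
end

section
/- Let T be a frugal ambiguous shattered H-tree, v* an internal vertex with instance label x*, and A the set of edge labels y_b of edges b on the root-to-v* path whose parent vertex has instance label x*. Then some child edge a of v* has label y_a outside the Λ(H)-hull of A, where Λ(H) is the minimal Y-lattice containing all values h(x) for h ∈ H, x ∈ X. -/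
/-- A tree is frugal when every `E0`-edge is relevant to at least one leaf below it. -/
def AmbTree.Frugal {X Y : Type} {H : Set (X → Set Y)} (T : AmbTree X Y H) : Prop :=
  ∀ a ∈ T.E0, ∃ u : T.t.V, T.t.IsLeaf u ∧ T.Relevant a u

/-- in a frugal ambiguous shattered `H`-tree, for any internal vertex
`v*` with instance label `x*`, letting `A` be the set of labels of edges on the
root-to-`v*` path whose parent vertex carries the instance `x*`, some child edge of
`v*` has its label outside the `Λ(H)`-hull of `A`. -/
theorem frugal_repeated_instance {X Y : Type} [Fintype Y] (H : Set (X → Set Y))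
    (T : AmbTree X Y H) (hfr : T.Frugal) (v : T.t.V) (hv : ¬ T.t.IsLeaf v) :
    ∃ a : T.t.V, a ≠ T.t.root ∧ T.t.parent a = v ∧
      T.ylab a ∉ latHull (LamH H)
        {y : Y | ∃ b : T.t.V, b ≠ T.t.root ∧ T.t.Anc b v ∧
          T.xlab (T.t.parent b) = T.xlab v ∧ y = T.ylab b} := by
  -- v has children
  have hne : (T.t.children v).Nonempty := by
    rw [RTree.IsLeaf] at hv
    exact Set.nonempty_iff_ne_empty.mpr hv
  obtain ⟨a₀, ⟨⟨ha₀p, ha₀r⟩, ha₀E⟩, -⟩ := T.e0_unique v hne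
  obtain ⟨u, hu, ha₀ne, hanc, hrel⟩ := hfr a₀ ha₀E
  rcases hrel with hE | ⟨b, hbp, hbr, hby⟩
  · exact absurd ha₀E hE
  refine ⟨b, hbr, by rw [hbp, ha₀p], ?_⟩
  -- Anc v u
  obtain ⟨k, hk⟩ := hanc
  have hvu : T.t.Anc v u := ⟨k + 1, by rw [Function.iterate_succ_apply', hk, ha₀p]⟩
  -- hlab u (xlab v) belongs to Λ(H) and contains A
  intro hmem
  have hcontra : T.ylab b ∈ T.hlab u (T.xlab v) := by
    refine hmem (T.hlab u (T.xlab v)) ⟨?_, ?_⟩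
    · intro L hL hH
      exact hH _ (T.hlab_mem u hu) _
    · rintro y ⟨b', hb'r, ⟨j, hj⟩, hb'x, rfl⟩
      have hb'u : T.t.Anc b' u := ⟨j + (k + 1), by
        rw [Function.iterate_add_apply, Function.iterate_succ_apply', hk, ha₀p, hj]⟩
      have := T.path_mem u b' hu hb'u hb'r
      rwa [hb'x] at this
  rw [ha₀p] at hby
  exact hby hcontra
end

section
/- In ambiguous online learning, for every hypothesis class H and horizon N, if there exists an ambiguous shattered H-tree T with depth n and rank r, then every deterministic learner A makes at least r mistakes on some h ∈ H and some trace of length at most n compatible with h. Hence M*_H(n) ≥ AL(H, n). -/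
/-- `AL(H, N)`: the maximal rank of an ambiguous shattered `H`-tree of depth at most `N`. -/
noncomputable def ALn (X Y : Type) (H : Set (X → Set Y)) (N : ℕ) : ℕ :=
  sSup {r : ℕ | ∃ T : AmbTree X Y H, T.depth ≤ N ∧ r = T.rank}

/-- A trace is compatible with `h` when every observed label is allowed by `h`. -/
def Compatible {X Y : Type} (h : X → Set Y) (xs : List (X × Y)) : Prop :=
  ∀ p ∈ xs, p.2 ∈ h p.1

/-- Number of mistakes (overconfidence or underconfidence) of learner `A` on a
trace, relative to hypothesis `h`. -/
noncomputable def numMistakes {X Y : Type} (A : List (X × Y) → X → Set Y)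
    (h : X → Set Y) (xs : List (X × Y)) : ℕ :=
  {k : ℕ | ∃ hk : k < xs.length,
    (xs.get ⟨k, hk⟩).2 ∉ A (xs.take k) (xs.get ⟨k, hk⟩).1 ∨
      ¬ A (xs.take k) (xs.get ⟨k, hk⟩).1 ⊆ h (xs.get ⟨k, hk⟩).1}.ncard

/-- The minimax mistake bound for deterministic learners over traces of length `N`. -/
noncomputable def Mstar {X Y : Type} (H : Set (X → Set Y)) (N : ℕ) : ℕ :=
  sInf {m : ℕ | ∃ A : List (X × Y) → X → Set Y, ∀ h ∈ H, ∀ xs : List (X × Y),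
    Compatible h xs → xs.length = N → numMistakes A h xs ≤ m}

namespace RTree

variable (t : RTree)

lemma iter_root (k : ℕ) : t.parent^[k] t.root = t.root :=
  Function.iterate_fixed t.parent_root k

lemma d_spec (v : t.V) : t.parent^[t.depthOf v] v = t.root :=
  Nat.sInf_mem (t.reaches v)

lemma d_le {v : t.V} {k : ℕ} (h : t.parent^[k] v = t.root) : t.depthOf v ≤ k :=
  Nat.sInf_le h

lemma d_root : t.depthOf t.root = 0 :=
  Nat.le_zero.mp (t.d_le (by simp))

lemma d_le_parent_succ (v : t.V) : t.depthOf v ≤ t.depthOf (t.parent v) + 1 :=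
  t.d_le (by rw [Function.iterate_succ_apply]; exact t.d_spec (t.parent v))

lemma d_parent_le (v : t.V) : t.depthOf (t.parent v) ≤ t.depthOf v :=
  t.d_le (by rw [← Function.iterate_succ_apply, Function.iterate_succ_apply',
    t.d_spec v, t.parent_root])

lemma d_iter_le (m : ℕ) (v : t.V) : t.depthOf (t.parent^[m] v) ≤ t.depthOf v := by
  induction m with
  | zero => simp
  | succ n ih =>
      rw [Function.iterate_succ_apply']
      exact le_trans (t.d_parent_le _) ih

lemma le_d_iter (m : ℕ) (v : t.V) : t.depthOf v ≤ m + t.depthOf (t.parent^[m] v) := by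
  induction m with
  | zero => simp
  | succ n ih =>
      rw [Function.iterate_succ_apply']
      calc t.depthOf v ≤ n + t.depthOf (t.parent^[n] v) := ih
        _ ≤ n + (t.depthOf (t.parent (t.parent^[n] v)) + 1) :=
            Nat.add_le_add_left (t.d_le_parent_succ _) n
        _ = n + 1 + t.depthOf (t.parent (t.parent^[n] v)) := by omega

lemma d_iter_eq {m : ℕ} {v : t.V} (h : m ≤ t.depthOf v) :
    t.depthOf (t.parent^[m] v) = t.depthOf v - m := by
  have h1 : t.depthOf (t.parent^[m] v) ≤ t.depthOf v - m := by
    apply t.d_le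
    rw [← Function.iterate_add_apply]
    rw [show t.depthOf v - m + m = t.depthOf v by omega]
    exact t.d_spec v
  have h2 := t.le_d_iter m v
  omega

lemma anc_canon {a v : t.V} (h : t.Anc a v) :
    t.parent^[t.depthOf v - t.depthOf a] v = a := by
  obtain ⟨i, hi⟩ := h
  rcases le_or_gt i (t.depthOf v) with hle | hlt
  · have := t.d_iter_eq hle
    rw [hi] at this
    rw [show t.depthOf v - t.depthOf a = i by omega, hi]
  · have ha : a = t.root := by
      rw [← hi, show i = (i - t.depthOf v) + t.depthOf v by omega,
        Function.iterate_add_apply, t.d_spec v, t.iter_root]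
    rw [ha, t.d_root, Nat.sub_zero]
    exact t.d_spec v

lemma d_anc_le {a v : t.V} (h : t.Anc a v) : t.depthOf a ≤ t.depthOf v := by
  obtain ⟨i, hi⟩ := h
  rw [← hi]; exact t.d_iter_le i v

lemma anc_refl (v : t.V) : t.Anc v v := ⟨0, rfl⟩

lemma anc_trans {a b c : t.V} (hab : t.Anc a b) (hbc : t.Anc b c) : t.Anc a c := by
  obtain ⟨i, hi⟩ := hab
  obtain ⟨j, hj⟩ := hbc
  exact ⟨i + j, by rw [Function.iterate_add_apply, hj, hi]⟩

lemma anc_root (v : t.V) : t.Anc t.root v := t.reaches v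

lemma anc_eq_of_d_eq {a b v : t.V} (ha : t.Anc a v) (hb : t.Anc b v)
    (hd : t.depthOf a = t.depthOf b) : a = b := by
  rw [← t.anc_canon ha, ← t.anc_canon hb, hd]

lemma anc_of_anc_anc {a b v : t.V} (ha : t.Anc a v) (hb : t.Anc b v)
    (hd : t.depthOf a ≤ t.depthOf b) : t.Anc a b := by
  refine ⟨t.depthOf b - t.depthOf a, ?_⟩
  have hbv := t.d_anc_le hb
  calc t.parent^[t.depthOf b - t.depthOf a] b
      = t.parent^[t.depthOf b - t.depthOf a]
          (t.parent^[t.depthOf v - t.depthOf b] v) := by rw [t.anc_canon hb]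
    _ = t.parent^[t.depthOf b - t.depthOf a + (t.depthOf v - t.depthOf b)] v :=
        (Function.iterate_add_apply _ _ _ _).symm
    _ = t.parent^[t.depthOf v - t.depthOf a] v := by
        rw [show t.depthOf b - t.depthOf a + (t.depthOf v - t.depthOf b)
          = t.depthOf v - t.depthOf a by omega]
    _ = a := t.anc_canon ha

lemma d_ne_root {v : t.V} (h : v ≠ t.root) : t.depthOf v ≠ 0 := by
  intro h0
  apply h
  have := t.d_spec v
  rwa [h0] at this

lemma child_d {a v : t.V} (h : a ∈ t.children v) :
    t.depthOf a = t.depthOf v + 1 := by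
  obtain ⟨hp, hr⟩ := h
  have h1 : t.depthOf a ≤ t.depthOf v + 1 := by
    have := t.d_le_parent_succ a; rwa [hp] at this
  have h2 : t.depthOf a ≠ 0 := t.d_ne_root hr
  have h3 : t.depthOf v ≤ t.depthOf a - 1 := by
    apply t.d_le
    have hs := t.d_spec a
    rw [show t.depthOf a = t.depthOf a - 1 + 1 by omega,
      Function.iterate_succ_apply, hp] at hs
    exact hs
  omega

lemma anc_child {a v : t.V} (h : a ∈ t.children v) : t.Anc v a :=
  ⟨1, by simp [h.1]⟩

lemma anc_anc_eq {a v : t.V} (h1 : t.Anc a v) (h2 : t.Anc v a) : a = v := by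
  have := t.d_anc_le h1
  have := t.d_anc_le h2
  exact t.anc_eq_of_d_eq h1 (t.anc_refl v) (by omega)

end RTree

section MistakeLemmas

open scoped Classical

variable {X Y : Type}

/-- The set of mistake rounds. -/
def misSet (A : List (X × Y) → X → Set Y) (h : X → Set Y) (xs : List (X × Y)) :
    Set ℕ :=
  {k : ℕ | ∃ hk : k < xs.length,
    (xs.get ⟨k, hk⟩).2 ∉ A (xs.take k) (xs.get ⟨k, hk⟩).1 ∨
      ¬ A (xs.take k) (xs.get ⟨k, hk⟩).1 ⊆ h (xs.get ⟨k, hk⟩).1}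

lemma numMistakes_eq (A : List (X × Y) → X → Set Y) (h : X → Set Y)
    (xs : List (X × Y)) : numMistakes A h xs = (misSet A h xs).ncard := rfl

lemma misSet_subset (A : List (X × Y) → X → Set Y) (h : X → Set Y)
    (xs : List (X × Y)) : misSet A h xs ⊆ Set.Iio xs.length := by
  rintro k ⟨hk, -⟩; exact hk

lemma misSet_finite (A : List (X × Y) → X → Set Y) (h : X → Set Y)
    (xs : List (X × Y)) : (misSet A h xs).Finite :=
  (Set.finite_Iio _).subset (misSet_subset A h xs)

lemma numMistakes_le_length (A : List (X × Y) → X → Set Y) (h : X → Set Y)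
    (xs : List (X × Y)) : numMistakes A h xs ≤ xs.length := by
  rw [numMistakes_eq]
  calc (misSet A h xs).ncard ≤ (Set.Iio xs.length).ncard :=
        Set.ncard_le_ncard (misSet_subset A h xs) (Set.finite_Iio _)
    _ = xs.length := by
        rw [show Set.Iio xs.length = ↑(Finset.range xs.length) by
          ext; simp, Set.ncard_coe_finset, Finset.card_range]

lemma numMistakes_cons_ge (A : List (X × Y) → X → Set Y) (h : X → Set Y)
    (x : X) (y : Y) (xs : List (X × Y)) :
    (if (y ∉ A [] x ∨ ¬ A [] x ⊆ h x) then 1 else 0) +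
      numMistakes (fun l => A ((x, y) :: l)) h xs ≤
      numMistakes A h ((x, y) :: xs) := by
  set A' : List (X × Y) → X → Set Y := fun l => A ((x, y) :: l) with hA'
  have himg : Nat.succ '' misSet A' h xs ⊆ misSet A h ((x, y) :: xs) := by
    rintro k ⟨j, ⟨hj, hcond⟩, rfl⟩
    refine ⟨by simpa using Nat.succ_lt_succ hj, ?_⟩
    simpa [A', List.take_succ_cons] using hcond
  have hcard : (Nat.succ '' misSet A' h xs).ncard = (misSet A' h xs).ncard :=
    Set.ncard_image_of_injective _ Nat.succ_injective
  rw [numMistakes_eq, numMistakes_eq]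
  by_cases h0 : y ∉ A [] x ∨ ¬ A [] x ⊆ h x
  · rw [if_pos h0]
    have h0mem : 0 ∈ misSet A h ((x, y) :: xs) := by
      refine ⟨by simp, ?_⟩
      simpa using h0
    have hins : insert 0 (Nat.succ '' misSet A' h xs) ⊆ misSet A h ((x, y) :: xs) := by
      rw [Set.insert_subset_iff]; exact ⟨h0mem, himg⟩
    have h0nm : 0 ∉ Nat.succ '' misSet A' h xs := by
      rintro ⟨j, -, hj⟩; exact Nat.succ_ne_zero j hj
    calc 1 + (misSet A' h xs).ncard
        = (insert 0 (Nat.succ '' misSet A' h xs)).ncard := by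
          rw [Set.ncard_insert_of_notMem h0nm
            (((misSet_finite A' h xs).image _))]
          omega
      _ ≤ (misSet A h ((x, y) :: xs)).ncard :=
          Set.ncard_le_ncard hins (misSet_finite _ _ _)
  · rw [if_neg h0, zero_add, ← hcard]
    exact Set.ncard_le_ncard himg (misSet_finite _ _ _)

end MistakeLemmas

namespace AmbTree

open scoped Classical

variable {X Y : Type} {H : Set (X → Set Y)}

/-- Statement of the recursive adversary construction from vertex `v`. -/
def Goal (T : AmbTree X Y H) (v : T.t.V) (A : List (X × Y) → X → Set Y) : Prop :=
  ∃ u : T.t.V, T.t.IsLeaf u ∧ T.t.Anc v u ∧ ∃ xs : List (X × Y),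
    Compatible (T.hlab u) xs ∧ xs.length = T.t.depthOf u - T.t.depthOf v ∧
    {b : T.t.V | T.Relevant b u ∧ T.t.Anc v b ∧ b ≠ v}.ncard ≤
      numMistakes A (T.hlab u) xs

lemma leaf_case (T : AmbTree X Y H) (v : T.t.V) (hv : T.t.IsLeaf v)
    (A : List (X × Y) → X → Set Y) : T.Goal v A := by
  refine ⟨v, hv, T.t.anc_refl v, [], by intro p hp; simp at hp, by simp, ?_⟩
  have hempty : {b : T.t.V | T.Relevant b v ∧ T.t.Anc v b ∧ b ≠ v} = ∅ := by
    ext b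
    simp only [Set.mem_setOf_eq, Set.mem_empty_iff_false, iff_false, not_and]
    intro hrel hanc hne
    exact hne (T.t.anc_anc_eq hrel.2.1 hanc)
  rw [hempty]
  simp [numMistakes]

lemma step_case (T : AmbTree X Y H) (v : T.t.V) (A : List (X × Y) → X → Set Y)
    (n : ℕ)
    (ih : ∀ (v : T.t.V) (A : List (X × Y) → X → Set Y),
      (∀ w, T.t.Anc v w → T.t.depthOf w ≤ T.t.depthOf v + n) → T.Goal v A)
    (hfuel : ∀ w, T.t.Anc v w → T.t.depthOf w ≤ T.t.depthOf v + (n + 1))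
    (a : T.t.V) (hac : a ∈ T.t.children v)
    (hkey0 : T.ylab a ∉ A [] (T.xlab v) ∨
      (a ∈ T.E0 ∧ (∀ y ∈ T.t.children v ∩ T.E0, y = a) ∧
        ∀ b ∈ T.t.children v, b ∉ T.E0 → T.ylab b ∈ A [] (T.xlab v))) :
    T.Goal v A := by
  haveI : Fintype T.t.V := T.t.fin
  have hda : T.t.depthOf a = T.t.depthOf v + 1 := T.t.child_d hac
  have hva : T.t.Anc v a := T.t.anc_child hac
  obtain ⟨u, hu, hau, xs', hcomp', hlen', hcard'⟩ :=
    ih a (fun l => A ((T.xlab v, T.ylab a) :: l))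
      (fun w hw => by have := hfuel w (T.t.anc_trans hva hw); omega)
  have hvu : T.t.Anc v u := T.t.anc_trans hva hau
  have hdau : T.t.depthOf a ≤ T.t.depthOf u := T.t.d_anc_le hau
  have hpath : T.ylab a ∈ T.hlab u (T.xlab v) := by
    have := T.path_mem u a hu hau hac.2
    rwa [hac.1] at this
  refine ⟨u, hu, hvu, (T.xlab v, T.ylab a) :: xs', ?_, ?_, ?_⟩
  · intro p hp
    rcases List.mem_cons.mp hp with h | h
    · rw [h]; exact hpath
    · exact hcomp' p h
  · simp only [List.length_cons, hlen']; omega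
  · -- relevance of edge `a` implies a mistake at round 0
    have hkey : T.Relevant a u →
        (T.ylab a ∉ A [] (T.xlab v) ∨ ¬ A [] (T.xlab v) ⊆ T.hlab u (T.xlab v)) := by
      intro hrel
      rcases hkey0 with h | ⟨haE, huniq, hall⟩
      · exact Or.inl h
      · rcases hrel.2.2 with h | ⟨b, hbp, hbr, hby⟩
        · exact absurd haE h
        · right
          rw [hac.1] at hbp hby
          have hbc : b ∈ T.t.children v := ⟨hbp, hbr⟩
          have hbE : b ∉ T.E0 := by
            intro hbE
            have hba : b = a := huniq b ⟨hbc, hbE⟩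
            rw [hba] at hby
            exact hby hpath
          intro hsub
          exact hby (hsub (hall b hbc hbE))
    have hdvb : ∀ b : T.t.V, T.t.Anc v b → b ≠ v → T.t.depthOf v < T.t.depthOf b := by
      intro b hvb hbv
      have h1 := T.t.d_anc_le hvb
      rcases lt_or_eq_of_le h1 with h | h
      · exact h
      · exact absurd (T.t.anc_eq_of_d_eq hvb (T.t.anc_refl b) h).symm hbv
    have hmem : ∀ b : T.t.V, T.Relevant b u → T.t.Anc v b → b ≠ v → b ≠ a →
        b ∈ {b : T.t.V | T.Relevant b u ∧ T.t.Anc a b ∧ b ≠ a} := by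
      intro b hrel hvb hbv hba
      have hdb := hdvb b hvb hbv
      have hab : T.t.Anc a b :=
        T.t.anc_of_anc_anc hau hrel.2.1 (by omega)
      exact ⟨hrel, hab, hba⟩
    have hcons := numMistakes_cons_ge A (T.hlab u) (T.xlab v) (T.ylab a) xs'
    by_cases hra : T.Relevant a u
    · have hsub : {b : T.t.V | T.Relevant b u ∧ T.t.Anc v b ∧ b ≠ v} ⊆
          insert a {b : T.t.V | T.Relevant b u ∧ T.t.Anc a b ∧ b ≠ a} := by
        rintro b ⟨hrel, hvb, hbv⟩
        by_cases hba : b = a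
        · exact Or.inl hba
        · exact Or.inr (hmem b hrel hvb hbv hba)
      have h1 : {b : T.t.V | T.Relevant b u ∧ T.t.Anc v b ∧ b ≠ v}.ncard ≤
          {b : T.t.V | T.Relevant b u ∧ T.t.Anc a b ∧ b ≠ a}.ncard + 1 :=
        le_trans (Set.ncard_le_ncard hsub (Set.toFinite _)) (Set.ncard_insert_le _ _)
      rw [if_pos (hkey hra)] at hcons
      omega
    · have hsub : {b : T.t.V | T.Relevant b u ∧ T.t.Anc v b ∧ b ≠ v} ⊆
          {b : T.t.V | T.Relevant b u ∧ T.t.Anc a b ∧ b ≠ a} := by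
        rintro b ⟨hrel, hvb, hbv⟩
        have hba : b ≠ a := by rintro rfl; exact hra hrel
        exact hmem b hrel hvb hbv hba
      have h1 : {b : T.t.V | T.Relevant b u ∧ T.t.Anc v b ∧ b ≠ v}.ncard ≤
          {b : T.t.V | T.Relevant b u ∧ T.t.Anc a b ∧ b ≠ a}.ncard :=
        Set.ncard_le_ncard hsub (Set.toFinite _)
      have h2 : (0:ℕ) ≤ if (T.ylab a ∉ A [] (T.xlab v) ∨
          ¬ A [] (T.xlab v) ⊆ T.hlab u (T.xlab v)) then 1 else 0 := by positivity
      omega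

lemma main_rec (T : AmbTree X Y H) :
    ∀ (fuel : ℕ) (v : T.t.V) (A : List (X × Y) → X → Set Y),
      (∀ w, T.t.Anc v w → T.t.depthOf w ≤ T.t.depthOf v + fuel) → T.Goal v A := by
  intro fuel
  induction fuel with
  | zero =>
      intro v A hfuel
      by_cases hv : T.t.IsLeaf v
      · exact leaf_case T v hv A
      · exfalso
        obtain ⟨a, ha⟩ := Set.nonempty_iff_ne_empty.mpr hv
        have h1 := hfuel a (T.t.anc_child ha)
        have h2 := T.t.child_d ha
        omega
  | succ n ih =>
      intro v A hfuel
      by_cases hv : T.t.IsLeaf v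
      · exact leaf_case T v hv A
      · have hne : (T.t.children v).Nonempty := Set.nonempty_iff_ne_empty.mpr hv
        obtain ⟨a0, ha0, huniq⟩ := T.e0_unique v hne
        by_cases hex : ∃ b ∈ T.t.children v, b ∉ T.E0 ∧ T.ylab b ∉ A [] (T.xlab v)
        · obtain ⟨a, hac, -, hay⟩ := hex
          exact step_case T v A n ih hfuel a hac (Or.inl hay)
        · push_neg at hex
          exact step_case T v A n ih hfuel a0 ha0.1
            (Or.inr ⟨ha0.2, fun y hy => huniq y hy, fun b hb hbE => hex b hb hbE⟩)

end AmbTree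

/-- every ambiguous shattered `H`-tree `T` forces every deterministic
learner to make at least `Rank(T)` mistakes on some `h ∈ H` and some compatible
trace of length at most `Depth(T)`; hence the minimax mistake bound over traces of
length at most `n` is at least `AL(H, n)`. -/
theorem lower_bound_from_tree {X Y : Type} [Fintype Y] (H : Set (X → Set Y)) :
    (∀ (T : AmbTree X Y H) (A : List (X × Y) → X → Set Y),
      ∃ h ∈ H, ∃ xs : List (X × Y), Compatible h xs ∧ xs.length ≤ T.depth ∧
        T.rank ≤ numMistakes A h xs) ∧
      ∀ N : ℕ, ALn X Y H N ≤
        sInf {m : ℕ | ∃ A : List (X × Y) → X → Set Y, ∀ h ∈ H, ∀ xs : List (X × Y),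
          Compatible h xs → xs.length ≤ N → numMistakes A h xs ≤ m} := by
  have part1 : ∀ (T : AmbTree X Y H) (A : List (X × Y) → X → Set Y),
      ∃ h ∈ H, ∃ xs : List (X × Y), Compatible h xs ∧ xs.length ≤ T.depth ∧
        T.rank ≤ numMistakes A h xs := by
    intro T A
    haveI : Fintype T.t.V := T.t.fin
    have hbdd : BddAbove {n : ℕ | ∃ v : T.t.V, n = T.t.depthOf v} := by
      apply Set.Finite.bddAbove
      have hsub : {n : ℕ | ∃ v : T.t.V, n = T.t.depthOf v} ⊆ Set.range T.t.depthOf := by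
        rintro n ⟨v, rfl⟩; exact ⟨v, rfl⟩
      exact (Set.finite_range _).subset hsub
    have hdle : ∀ w : T.t.V, T.t.depthOf w ≤ T.t.depth :=
      fun w => le_csSup hbdd ⟨w, rfl⟩
    obtain ⟨u, hu, hanc, xs, hcomp, hlen, hcard⟩ :=
      T.main_rec T.t.depth T.t.root A (fun w _ => by
        have := hdle w; rw [RTree.d_root]; omega)
    refine ⟨T.hlab u, T.hlab_mem u hu, xs, hcomp, ?_, ?_⟩
    · rw [hlen, RTree.d_root]
      have := hdle u
      show T.t.depthOf u - 0 ≤ T.t.depth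
      omega
    · have hset : {b : T.t.V | T.Relevant b u} =
          {b : T.t.V | T.Relevant b u ∧ T.t.Anc T.t.root b ∧ b ≠ T.t.root} := by
        ext b
        constructor
        · intro h; exact ⟨h, T.t.anc_root b, h.1⟩
        · intro h; exact h.1
      have hr : T.rank ≤ T.relCount u := Nat.sInf_le ⟨u, hu, rfl⟩
      have heq : T.relCount u =
          {b : T.t.V | T.Relevant b u ∧ T.t.Anc T.t.root b ∧ b ≠ T.t.root}.ncard := by
        rw [AmbTree.relCount, hset]
      omega
  refine ⟨part1, ?_⟩
  intro N
  have hNmem : N ∈ {m : ℕ | ∃ A : List (X × Y) → X → Set Y, ∀ h ∈ H,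
      ∀ xs : List (X × Y), Compatible h xs → xs.length ≤ N →
        numMistakes A h xs ≤ m} :=
    ⟨fun _ _ => ∅, fun h _ xs _ hl => le_trans (numMistakes_le_length _ _ _) hl⟩
  apply csSup_le'
  rintro r ⟨T, hdep, rfl⟩
  obtain ⟨A0, hA0⟩ := Nat.sInf_mem ⟨N, hNmem⟩
  obtain ⟨h, hh, xs, hc, hl, hr⟩ := part1 T A0
  exact le_trans hr (hA0 h hh xs hc (le_trans hl hdep))
end
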